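/- arXiv:1906.05744 — 2 statements merged into one kernel-verified Lean document; each statement's English description precedes it below -/
import Mathlib

section
/- Let T be a simplicial tree, let A₁, A₂, A₃ ⊆ T be three pairwise disjoint half-trees, and let g ∈ Aut(T). Then either there exists i ∈ {1,2,3} such that A_i and g(A_i) are disjoint, or g(A_i) = A_i for every i ∈ {1,2,3}. -/
open Set

universe v

variable {V : Type v}

/-- A permutation of the vertex set is an automorphism of the graph `T`. -/
def IsAut (T : SimpleGraph V) (g : Equiv.Perm V) : Prop :=
  ∀ u v : V, T.Adj (g u) (g v) ↔ T.Adj u v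

/-- The half-tree determined by an (oriented) edge `(u, v)`: the set of vertices whose
geodesic to `u` passes through `v`. -/
def halfTree (T : SimpleGraph V) (u v : V) : Set V :=
  {w : V | ∀ p : T.Walk w u, v ∈ p.support}

/-- A half-tree of `T`. -/
def IsHalfTree (T : SimpleGraph V) (A : Set V) : Prop :=
  ∃ u v : V, T.Adj u v ∧ A = halfTree T u v

section Aux

open SimpleGraph

variable {T : SimpleGraph V} [DecidableEq V]

lemma HT.path_unique (hT : T.IsTree) {a b : V} (p q : T.Walk a b)
    (hp : p.IsPath) (hq : q.IsPath) : p = q := by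
  have := isAcyclic_iff_path_unique.mp hT.2 (p := ⟨p, hp⟩) (q := ⟨q, hq⟩)
  exact congrArg Subtype.val this

lemma HT.exists_path_avoiding {u v w : V} (h : w ∉ halfTree T u v) :
    ∃ q : T.Walk w u, q.IsPath ∧ v ∉ q.support := by
  simp only [halfTree, Set.mem_setOf_eq, not_forall] at h
  obtain ⟨q, hq⟩ := h
  exact ⟨q.toPath.1, q.toPath.2, fun hv => hq (Walk.support_toPath_subset q hv)⟩

lemma HT.mem_halfTree_iff (hT : T.IsTree) {u v w : V} (p : T.Walk w u) (hp : p.IsPath) :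
    w ∈ halfTree T u v ↔ v ∈ p.support := by
  constructor
  · exact fun h => h p
  · intro hv q
    have hq : (q.toPath : T.Walk w u) = p :=
      HT.path_unique hT _ _ q.toPath.2 hp
    exact Walk.support_toPath_subset q (hq ▸ hv)

lemma HT.base_mem (u v : V) : v ∈ halfTree T u v :=
  fun p => p.start_mem_support

lemma HT.base_not_mem {u v : V} (huv : T.Adj u v) : u ∉ halfTree T u v := by
  intro h
  have := h Walk.nil
  simp at this
  exact huv.ne' this

lemma HT.not_mem_takeUntil {a b m : V} {p : T.Walk a b} (hp : p.IsPath)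
    (hm : m ∈ p.support) (hb : b ≠ m) : b ∉ (p.takeUntil m hm).support := by
  intro hb'
  have hspec := p.take_spec hm
  have hnd := hp.support_nodup
  rw [← hspec, Walk.support_append] at hnd
  have hdisj := (List.nodup_append.mp hnd).2.2
  have hbd : b ∈ (p.dropUntil m hm).support := Walk.end_mem_support _
  have hbt : b ∈ (p.dropUntil m hm).support.tail := by
    rw [Walk.support_eq_cons (p.dropUntil m hm)] at hbd
    rcases List.mem_cons.mp hbd with h | h
    · exact absurd h hb
    · exact h
  exact hdisj b hb' b hbt rfl

lemma HT.compl_halfTree (hT : T.IsTree) {u v : V} (huv : T.Adj u v) :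
    (halfTree T u v)ᶜ = halfTree T v u := by
  ext w
  simp only [Set.mem_compl_iff]
  obtain ⟨p, hp, -⟩ := hT.1.exists_path_of_dist w u
  by_cases hv : v ∈ p.support
  · have hw : w ∈ halfTree T u v := (HT.mem_halfTree_iff hT p hp).mpr hv
    simp only [hw, not_true_eq_false, false_iff]
    intro hcon
    have hu : u ∉ (p.takeUntil v hv).support :=
      HT.not_mem_takeUntil hp hv huv.ne
    exact hu (hcon (p.takeUntil v hv))
  · have hw : w ∉ halfTree T u v := fun h => hv (h p)
    simp only [hw, not_false_eq_true, true_iff]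
    have hr : (Walk.cons huv.symm p.reverse).reverse.IsPath := by
      rw [Walk.isPath_reverse_iff]
      apply hp.reverse.cons
      rwa [Walk.support_reverse, List.mem_reverse]
    rw [HT.mem_halfTree_iff hT _ hr]
    simp only [Walk.support_reverse, List.mem_reverse, Walk.support_cons, List.mem_cons]
    exact Or.inr p.end_mem_support

lemma HT.boundary (hT : T.IsTree) {u v a b : V} (huv : T.Adj u v) (hab : T.Adj a b)
    (ha : a ∈ halfTree T u v) (hb : b ∉ halfTree T u v) : a = v ∧ b = u := by
  obtain ⟨r, hr, hvr⟩ := HT.exists_path_avoiding hb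
  have har : a ∉ r.support := by
    intro har
    have hvd : v ∉ (r.dropUntil a har).support :=
      fun h => hvr (Walk.support_dropUntil_subset r har h)
    exact hvd (ha (r.dropUntil a har))
  have hs : (Walk.cons hab r).IsPath := hr.cons har
  have hva : a = v := by
    have hmem := ha (Walk.cons hab r)
    rw [Walk.support_cons] at hmem
    rcases List.mem_cons.mp hmem with h | h
    · exact h.symm
    · exact absurd h hvr
  subst hva
  refine ⟨rfl, ?_⟩
  have he : (Walk.cons huv.symm (Walk.nil' u)).IsPath := by
    simp [Walk.cons_isPath_iff, huv.ne']
  have heq := HT.path_unique hT _ _ hs he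
  have hsup := congrArg Walk.support heq
  rw [Walk.support_cons, Walk.support_cons, Walk.support_nil] at hsup
  have hrs : r.support = [u] := by injection hsup
  have hbr : b ∈ r.support := r.start_mem_support
  rw [hrs] at hbr
  simpa using hbr

lemma HT.convex (hT : T.IsTree) {u v z z' : V} (hz : z ∈ halfTree T u v)
    (hz' : z' ∈ halfTree T u v) {p : T.Walk z z'} (hp : p.IsPath) :
    ∀ m ∈ p.support, m ∈ halfTree T u v := by
  intro m hm
  by_contra hmA
  obtain ⟨r, hr, hvr⟩ := HT.exists_path_avoiding hmA
  have hvt : v ∈ (p.takeUntil m hm).support := by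
    have hmem := hz ((p.takeUntil m hm).append r)
    rw [Walk.mem_support_append_iff] at hmem
    rcases hmem with h | h
    · exact h
    · exact absurd h hvr
  have hvd : v ∈ (p.dropUntil m hm).support := by
    have hmem := hz' ((p.dropUntil m hm).reverse.append r)
    rw [Walk.mem_support_append_iff] at hmem
    rcases hmem with h | h
    · rwa [Walk.support_reverse, List.mem_reverse] at h
    · exact absurd h hvr
  have hvm : v ≠ m := fun h => hmA (h ▸ HT.base_mem u v)
  have hvtail : v ∈ (p.dropUntil m hm).support.tail := by
    rw [Walk.support_eq_cons (p.dropUntil m hm)] at hvd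
    rcases List.mem_cons.mp hvd with h | h
    · exact absurd h hvm
    · exact h
  have hnd := hp.support_nodup
  rw [← p.take_spec hm, Walk.support_append] at hnd
  exact (List.nodup_append.mp hnd).2.2 v hvt v hvtail rfl

lemma HT.exists_crossing {S : Set V} : ∀ {a b : V} (p : T.Walk a b), a ∈ S → b ∉ S →
    ∃ m m', T.Adj m m' ∧ m ∈ S ∧ m' ∉ S ∧ m ∈ p.support ∧ m' ∈ p.support := by
  intro a b p
  induction p with
  | nil => intro ha hb; exact absurd ha hb
  | @cons a c b hadj q ih =>
    intro ha hb
    by_cases hc : c ∈ S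
    · obtain ⟨m, m', h1, h2, h3, h4, h5⟩ := ih hc hb
      refine ⟨m, m', h1, h2, h3, ?_, ?_⟩
      · rw [Walk.support_cons]; exact List.mem_cons_of_mem _ h4
      · rw [Walk.support_cons]; exact List.mem_cons_of_mem _ h5
    · refine ⟨a, c, hadj, ha, hc, Walk.start_mem_support _, ?_⟩
      rw [Walk.support_cons]; exact List.mem_cons_of_mem _ q.start_mem_support

lemma HT.trichotomy (hT : T.IsTree) {u v x y : V} (huv : T.Adj u v) (hxy : T.Adj x y) :
    halfTree T u v ⊆ halfTree T x y ∨ halfTree T x y ⊆ halfTree T u v ∨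
      Disjoint (halfTree T u v) (halfTree T x y) ∨
      halfTree T u v ∪ halfTree T x y = univ := by
  by_cases hx : x ∈ halfTree T u v <;> by_cases hy : y ∈ halfTree T u v
  · -- both endpoints of the B-edge inside A : B ⊆ A or A ∪ B = univ
    by_cases hzB : ∃ z, z ∉ halfTree T u v ∧ z ∈ halfTree T x y
    · right; right; right
      rw [Set.eq_univ_iff_forall]
      intro w
      by_contra hw
      rw [Set.mem_union] at hw
      push_neg at hw
      obtain ⟨hwA, hwB⟩ := hw
      obtain ⟨z, hzA, hzB⟩ := hzB
      have hzA' : z ∈ halfTree T v u := by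
        rw [← HT.compl_halfTree hT huv]; exact hzA
      have hwA' : w ∈ halfTree T v u := by
        rw [← HT.compl_halfTree hT huv]; exact hwA
      obtain ⟨p, hp, -⟩ := hT.1.exists_path_of_dist z w
      obtain ⟨m, m', hadj, hmB, hm'B, hms, hm's⟩ := HT.exists_crossing p hzB hwB
      have hmy := (HT.boundary hT hxy hadj hmB hm'B).1
      subst hmy
      have hmem : m ∈ halfTree T v u := HT.convex hT hzA' hwA' hp _ hms
      rw [← HT.compl_halfTree hT huv] at hmem
      exact hmem hy
    · right; left
      intro b hbB
      by_contra hbA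
      exact hzB ⟨b, hbA, hbB⟩
  · -- x ∈ A, y ∉ A : crossing edge, B = Aᶜ
    obtain ⟨h1, h2⟩ := HT.boundary hT huv hxy hx hy
    right; right; left
    rw [h1, h2, ← HT.compl_halfTree hT huv]
    exact disjoint_compl_right
  · -- x ∉ A, y ∈ A : B = A
    obtain ⟨h1, h2⟩ := HT.boundary hT huv hxy.symm hy hx
    left
    rw [h1, h2]
  · -- both outside A : A ⊆ B or Disjoint A B
    by_cases hzB : ∃ z, z ∈ halfTree T u v ∧ z ∈ halfTree T x y
    · left
      obtain ⟨z, hzA, hzB⟩ := hzB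
      intro z' hz'A
      by_contra hz'B
      obtain ⟨p, hp, -⟩ := hT.1.exists_path_of_dist z z'
      obtain ⟨m, m', hadj, hmB, hm'B, hms, hm's⟩ := HT.exists_crossing p hzB hz'B
      have hmy := (HT.boundary hT hxy hadj hmB hm'B).1
      subst hmy
      exact hy (HT.convex hT hzA hz'A hp _ hms)
    · right; right; left
      rw [Set.disjoint_left]
      intro z hzA hzB'
      exact hzB ⟨z, hzA, hzB'⟩

lemma HT.isAut_inv {g : Equiv.Perm V} (hg : IsAut T g) : IsAut T g⁻¹ := by
  intro a b
  have := hg (g⁻¹ a) (g⁻¹ b)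
  simpa [Equiv.Perm.inv_def] using this.symm

/-- The graph homomorphism underlying an automorphism. -/
def HT.autHom (g : Equiv.Perm V) (hg : IsAut T g) : T →g T :=
  ⟨⇑g, fun h => (hg _ _).mpr h⟩

@[simp] lemma HT.autHom_apply (g : Equiv.Perm V) (hg : IsAut T g) (a : V) :
    HT.autHom g hg a = g a := rfl

lemma HT.image_halfTree {g : Equiv.Perm V} (hg : IsAut T g) (u v : V) :
    g '' halfTree T u v = halfTree T (g u) (g v) := by
  have hg' := HT.isAut_inv hg
  ext w
  constructor
  · rintro ⟨z, hz, rfl⟩ q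
    have hv := hz ((q.map (HT.autHom g⁻¹ hg')).copy (by simp) (by simp))
    rw [Walk.support_copy, Walk.support_map] at hv
    obtain ⟨c, hc, hcv⟩ := List.mem_map.mp hv
    have : c = g v := by
      have := congrArg g hcv
      simpa [Equiv.Perm.inv_def] using this
    rwa [← this]
  · intro hw
    refine ⟨g⁻¹ w, ?_, by simp⟩
    intro q
    have hv := hw ((q.map (HT.autHom g hg)).copy (by simp) (HT.autHom_apply g hg u))
    rw [Walk.support_copy, Walk.support_map] at hv
    obtain ⟨c, hc, hcv⟩ := List.mem_map.mp hv
    have : c = v := g.injective hcv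
    rwa [← this]

lemma HT.dist_image_le {g : Equiv.Perm V} (hg : IsAut T g) (hT : T.IsTree) (a b : V) :
    T.dist (g a) (g b) ≤ T.dist a b := by
  obtain ⟨p, hlen⟩ := hT.1.exists_walk_length_eq_dist a b
  calc T.dist (g a) (g b) ≤ (p.map (HT.autHom g hg)).length := SimpleGraph.dist_le _
    _ = p.length := Walk.length_map _ p
    _ = T.dist a b := hlen

lemma HT.dist_image {g : Equiv.Perm V} (hg : IsAut T g) (hT : T.IsTree) (a b : V) :
    T.dist (g a) (g b) = T.dist a b := by
  refine le_antisymm (HT.dist_image_le hg hT a b) ?_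
  have := HT.dist_image_le (HT.isAut_inv hg) hT (g a) (g b)
  simpa [Equiv.Perm.inv_def] using this

lemma HT.path_length_eq_dist (hT : T.IsTree) {a b : V} (p : T.Walk a b) (hp : p.IsPath) :
    p.length = T.dist a b := by
  obtain ⟨q, hq, hlen⟩ := hT.1.exists_path_of_dist a b
  rw [HT.path_unique hT p q hp hq, hlen]

lemma HT.dist_split (hT : T.IsTree) {a b m : V} (p : T.Walk a b) (hp : p.IsPath)
    (hm : m ∈ p.support) : T.dist a b = T.dist a m + T.dist m b := by
  have ht := hp.takeUntil hm
  have hd := hp.dropUntil hm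
  have hspec := congrArg Walk.length (p.take_spec hm)
  rw [Walk.length_append] at hspec
  rw [← HT.path_length_eq_dist hT p hp, ← HT.path_length_eq_dist hT _ ht,
    ← HT.path_length_eq_dist hT _ hd, ← hspec]

lemma HT.dist_cross (hT : T.IsTree) {u v a b : V} (huv : T.Adj u v)
    (ha : a ∈ halfTree T u v) (hb : b ∉ halfTree T u v) :
    T.dist a b = T.dist a v + T.dist v b ∧ T.dist a b = T.dist a u + T.dist u b := by
  obtain ⟨p, hp, -⟩ := hT.1.exists_path_of_dist a b
  obtain ⟨m, m', hadj, hmA, hm'A, hms, hm's⟩ := HT.exists_crossing p ha hb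
  obtain ⟨h1, h2⟩ := HT.boundary hT huv hadj hmA hm'A
  subst h1; subst h2
  exact ⟨HT.dist_split hT p hp hms, HT.dist_split hT p hp hm's⟩

/-- The key rigidity lemma: if an automorphism maps each of two disjoint half-trees into
itself, then it maps each of them onto itself. -/
lemma HT.star (hT : T.IsTree) {A B : Set V} (hA : IsHalfTree T A) (hB : IsHalfTree T B)
    (hAB : Disjoint A B) (g : Equiv.Perm V) (hg : IsAut T g)
    (h1 : g '' A ⊆ A) (h2 : g '' B ⊆ B) : g '' A = A := by
  obtain ⟨u, v, huv, rfl⟩ := hA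
  obtain ⟨x, y, hxy, rfl⟩ := hB
  have hv : v ∈ halfTree T u v := HT.base_mem u v
  have hy : y ∈ halfTree T x y := HT.base_mem x y
  have hgv : g v ∈ halfTree T u v := h1 (Set.mem_image_of_mem _ hv)
  have hgy : g y ∈ halfTree T x y := h2 (Set.mem_image_of_mem _ hy)
  have hyA : y ∉ halfTree T u v := fun h => Set.disjoint_left.mp hAB h hy
  have hgyA : g y ∉ halfTree T u v := fun h => Set.disjoint_left.mp hAB h hgy
  have hvB : v ∉ halfTree T x y := fun h => Set.disjoint_left.mp hAB hv h
  -- step 1 : g v = v and g y = y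
  have e0 : T.dist (g v) (g y) = T.dist v y := HT.dist_image hg hT v y
  have e1 : T.dist (g v) (g y) = T.dist (g v) v + T.dist v (g y) :=
    (HT.dist_cross hT huv hgv hgyA).1
  have e2 : T.dist (g y) v = T.dist (g y) y + T.dist y v :=
    (HT.dist_cross hT hxy hgy hvB).1
  have e3 : T.dist v (g y) = T.dist (g y) v := SimpleGraph.dist_comm
  have e4 : T.dist y v = T.dist v y := SimpleGraph.dist_comm
  have hz : T.dist (g v) v + T.dist (g y) y = 0 := by omega
  have hgvv : g v = v := (hT.1.dist_eq_zero_iff).mp (by omega)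
  have hgyy : g y = y := (hT.1.dist_eq_zero_iff).mp (by omega)
  -- step 2 : g u = u
  have hgu : g u = u := by
    by_cases hguA : g u ∈ halfTree T u v
    · exfalso
      have f0 : T.dist (g u) (g y) = T.dist u y := HT.dist_image hg hT u y
      rw [hgyy] at f0
      have f1 : T.dist (g u) y = T.dist (g u) v + T.dist v y :=
        (HT.dist_cross hT huv hguA hyA).1
      have f2 : T.dist v y = T.dist v u + T.dist u y :=
        (HT.dist_cross hT huv hv hyA).2
      have f3 : T.dist v u = 1 := SimpleGraph.dist_eq_one_iff_adj.mpr huv.symm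
      omega
    · have hadj : T.Adj (g v) (g u) := ((hg v u).mpr huv.symm)
      rw [hgvv] at hadj
      exact (HT.boundary hT huv hadj hv hguA).2
  rw [HT.image_halfTree hg, hgu, hgvv]

lemma HT.perm_image_inv (g : Equiv.Perm V) (s : Set V) : ⇑g '' (⇑(g⁻¹) '' s) = s := by
  ext w; simp

lemma HT.star' (hT : T.IsTree) {A B : Set V} (hA : IsHalfTree T A) (hB : IsHalfTree T B)
    (hAB : Disjoint A B) (g : Equiv.Perm V) (hg : IsAut T g)
    (h1 : A ⊆ g '' A) (h2 : B ⊆ g '' B) : g '' A = A := by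
  have k1 : ⇑(g⁻¹) '' A ⊆ A := by
    intro w hw
    obtain ⟨z, hz, rfl⟩ := hw
    obtain ⟨c, hc, rfl⟩ := h1 hz
    simpa using hc
  have k2 : ⇑(g⁻¹) '' B ⊆ B := by
    intro w hw
    obtain ⟨z, hz, rfl⟩ := hw
    obtain ⟨c, hc, rfl⟩ := h2 hz
    simpa using hc
  have heq := HT.star hT hA hB hAB g⁻¹ (HT.isAut_inv hg) k1 k2
  have h3 := congrArg (Set.image ⇑g) heq
  rw [HT.perm_image_inv] at h3
  exact h3.symm

lemma HT.nest (hT : T.IsTree) {A B : Set V} (hA : IsHalfTree T A) (hB : IsHalfTree T B)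
    (hAB : Disjoint A B) (g : Equiv.Perm V) (hg : IsAut T g)
    (hnA : ¬ Disjoint A (g '' A)) (hnB : ¬ Disjoint B (g '' B)) :
    g '' A ⊆ A ∨ A ⊆ g '' A := by
  obtain ⟨u, v, huv, rfl⟩ := hA
  have himg : g '' halfTree T u v = halfTree T (g u) (g v) := HT.image_halfTree hg u v
  have huv' : T.Adj (g u) (g v) := (hg u v).mpr huv
  rcases HT.trichotomy hT huv huv' with h | h | h | h
  · right; rwa [himg]
  · left; rwa [himg]
  · exact absurd (by rwa [himg]) hnA
  · exfalso
    have hBA : g '' B ⊆ halfTree T u v := by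
      intro w hw
      have hdisj : Disjoint (g '' halfTree T u v) (g '' B) :=
        (Set.disjoint_image_iff g.injective).mpr hAB
      have hwA : w ∉ halfTree T (g u) (g v) := by
        rw [← himg]
        exact Set.disjoint_right.mp hdisj hw
      rcases (Set.mem_union _ _ _).mp (Set.eq_univ_iff_forall.mp h w) with h' | h'
      · exact h'
      · exact absurd h' hwA
    exact hnB (hAB.symm.mono_right hBA)
lemma HT.fix3 (hT : T.IsTree) {A B : Set V} (hA : IsHalfTree T A) (hB : IsHalfTree T B)
    (hAB : Disjoint A B) (g : Equiv.Perm V) (hg : IsAut T g)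
    (hgA : g '' A = A) (hdir : g '' B ⊆ B ∨ B ⊆ g '' B) : g '' B = B := by
  rcases hdir with h | h
  · exact HT.star hT hB hA hAB.symm g hg h hgA.subset
  · exact HT.star' hT hB hA hAB.symm g hg h hgA.superset

end Aux

/-- **(Le Boudec--Matte Bon, Lemma 3.5.)** Let `A₁, A₂, A₃` be three pairwise disjoint
half-trees of a tree `T` and let `g ∈ Aut(T)`. Then either there is `i` such that `A_i`
and `g(A_i)` are disjoint, or `g(A_i) = A_i` for every `i`. -/
theorem tree_disjoint_halfTrees_move
    (T : SimpleGraph V) (hT : T.IsTree)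
    (A₁ A₂ A₃ : Set V)
    (h₁ : IsHalfTree T A₁) (h₂ : IsHalfTree T A₂) (h₃ : IsHalfTree T A₃)
    (hd₁₂ : Disjoint A₁ A₂) (hd₁₃ : Disjoint A₁ A₃) (hd₂₃ : Disjoint A₂ A₃)
    (g : Equiv.Perm V) (hg : IsAut T g) :
    (Disjoint A₁ (g '' A₁) ∨ Disjoint A₂ (g '' A₂) ∨ Disjoint A₃ (g '' A₃)) ∨
      (g '' A₁ = A₁ ∧ g '' A₂ = A₂ ∧ g '' A₃ = A₃) := by
    classical
  by_cases hn1 : Disjoint A₁ (g '' A₁)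
  · exact Or.inl (Or.inl hn1)
  by_cases hn2 : Disjoint A₂ (g '' A₂)
  · exact Or.inl (Or.inr (Or.inl hn2))
  by_cases hn3 : Disjoint A₃ (g '' A₃)
  · exact Or.inl (Or.inr (Or.inr hn3))
  right
  have d1 := HT.nest hT h₁ h₂ hd₁₂ g hg hn1 hn2
  have d2 := HT.nest hT h₂ h₁ hd₁₂.symm g hg hn2 hn1
  have d3 := HT.nest hT h₃ h₁ hd₁₃.symm g hg hn3 hn1
  have E : g '' A₁ = A₁ ∨ g '' A₂ = A₂ := by
    rcases d1 with c1 | c1 <;> rcases d2 with c2 | c2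
    · exact Or.inl (HT.star hT h₁ h₂ hd₁₂ g hg c1 c2)
    · rcases d3 with c3 | c3
      · exact Or.inl (HT.star hT h₁ h₃ hd₁₃ g hg c1 c3)
      · exact Or.inr (HT.star' hT h₂ h₃ hd₂₃ g hg c2 c3)
    · rcases d3 with c3 | c3
      · exact Or.inr (HT.star hT h₂ h₃ hd₂₃ g hg c2 c3)
      · exact Or.inl (HT.star' hT h₁ h₃ hd₁₃ g hg c1 c3)
    · exact Or.inl (HT.star' hT h₁ h₂ hd₁₂ g hg c1 c2)
  rcases E with e | e
  · exact ⟨e, HT.fix3 hT h₁ h₂ hd₁₂ g hg e d2, HT.fix3 hT h₁ h₃ hd₁₃ g hg e d3⟩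
  · exact ⟨HT.fix3 hT h₂ h₁ hd₁₂.symm g hg e d1, e, HT.fix3 hT h₂ h₃ hd₂₃ g hg e d3⟩
end

section
/- Let G ≤ Homeo(S¹) be a group of homeomorphisms of the circle whose action on S¹ is minimal and not topologically free. Suppose that G acts faithfully on a set Ω such that for every unordered pair Δ of distinct elements of Ω, the pointwise stabilizer G_Δ acts minimally on S¹. Then there exists ω ∈ Ω such that the action of the stabilizer G_ω on S¹ is not topologically free. -/
open Set

universe u

/-- The circle `S¹ = ℝ/ℤ`. -/
abbrev S1 := UnitAddCircle

/-- An action of `G` on `Ω` (given by `ρ : G →* Equiv.Perm Ω`) is `k`-transitive if it is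
transitive on ordered `k`-tuples of pairwise distinct elements of `Ω`. -/
def IsKTransitive {G : Type*} [Group G] {Ω : Type*} (ρ : G →* Equiv.Perm Ω) (k : ℕ) : Prop :=
  ∀ x y : Fin k ↪ Ω, ∃ g : G, ∀ i : Fin k, ρ g (x i) = y i

/-- A set of permutations of a topological space acts minimally: every orbit is dense. -/
def MinimalOn {X : Type*} [TopologicalSpace X] (S : Set (Equiv.Perm X)) : Prop :=
  ∀ x : X, Dense {y : X | ∃ g ∈ S, g x = y}

/-- A set of permutations of the circle is proximal: every proper open arc can be mapped
into every nonempty open arc by some element. -/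
def ProximalOn (S : Set (Equiv.Perm S1)) : Prop :=
  ∀ I J : Set S1, IsOpen I → IsPreconnected I → I ≠ univ →
    IsOpen J → IsPreconnected J → J.Nonempty →
    ∃ g ∈ S, (g : Equiv.Perm S1) '' I ⊆ J

/-- A set of permutations acts topologically freely: the fixed-point set of every
non-trivial element has empty interior. -/
def TopologicallyFreeOn {X : Type*} [TopologicalSpace X] (S : Set (Equiv.Perm X)) : Prop :=
  ∀ g ∈ S, g ≠ 1 → interior {x : X | g x = x} = (∅ : Set X)

/-- A permutation of the circle which is a homeomorphism. -/
def IsCircleHomeo (g : Equiv.Perm S1) : Prop := Continuous g ∧ Continuous g.symm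

/-- A permutation of the circle preserves the standard cyclic order (orientation). -/
def OrientationPreserving (g : Equiv.Perm S1) : Prop :=
  ∀ a b c : S1, sbtw a b c → sbtw (g a) (g b) (g c)


/-- The set of permutations of the circle coming from elements of `G` that stabilize the
point `ω` of `Ω` (the stabilizer `G_ω` viewed as acting on the circle). -/
def pointStabSet (G : Subgroup (Equiv.Perm S1)) {Ω : Type u} (ρ : G →* Equiv.Perm Ω)
    (ω : Ω) : Set (Equiv.Perm S1) :=
  {g : Equiv.Perm S1 | ∃ hg : g ∈ G, ρ ⟨g, hg⟩ ω = ω}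

/-- The set of permutations of the circle coming from elements of `G` that fix both points
`ω₁, ω₂` of `Ω` (the pointwise stabilizer `G_Δ` of the pair `Δ = {ω₁, ω₂}`, viewed as acting
on the circle). -/
def pairStabSet (G : Subgroup (Equiv.Perm S1)) {Ω : Type u} (ρ : G →* Equiv.Perm Ω)
    (ω₁ ω₂ : Ω) : Set (Equiv.Perm S1) :=
  {g : Equiv.Perm S1 | ∃ hg : g ∈ G, ρ ⟨g, hg⟩ ω₁ = ω₁ ∧ ρ ⟨g, hg⟩ ω₂ = ω₂}

theorem Equiv.Perm.inv_apply_self {α : Type*} (f : Equiv.Perm α) (x : α) : f⁻¹ (f x) = x :=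
  Equiv.symm_apply_apply f x

theorem Equiv.Perm.apply_inv_self {α : Type*} (f : Equiv.Perm α) (x : α) : f (f⁻¹ x) = x :=
  Equiv.apply_symm_apply f x

/-- **(Le Boudec--Matte Bon, Lemma 5.4.)** Let `G ≤ Homeo(S¹)` act minimally and not
topologically freely on `S¹`. Suppose `G` acts faithfully on a set `Ω` in such a way that
the pointwise stabilizer of every unordered pair of distinct points of `Ω` acts minimally
on `S¹`. Then some point stabilizer `G_ω` acts not topologically freely on `S¹`. -/
theorem circle_point_stabilizer_not_topologically_free
    (G : Subgroup (Equiv.Perm S1))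
    (hHomeo : ∀ g ∈ G, IsCircleHomeo g)
    (hmin : MinimalOn (G : Set (Equiv.Perm S1)))
    (hntf : ¬ TopologicallyFreeOn (G : Set (Equiv.Perm S1)))
    (Ω : Type u) (ρ : G →* Equiv.Perm Ω)
    (hfaithful : Function.Injective ρ)
    (hpairmin : ∀ ω₁ ω₂ : Ω, ω₁ ≠ ω₂ → MinimalOn (pairStabSet G ρ ω₁ ω₂)) :
    ∃ ω : Ω, ¬ TopologicallyFreeOn (pointStabSet G ρ ω) := by
  classical
  -- Extract a nontrivial element with fixed-point set of nonempty interior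
  rw [TopologicallyFreeOn] at hntf
  push_neg at hntf
  obtain ⟨g, hgG, hg1, hUne⟩ := hntf
  set FU : Set S1 := {x : S1 | g x = x} with hFU
  set U : Set S1 := interior FU with hUdef
  have hFclosed : IsClosed FU := isClosed_eq (hHomeo g hgG).1 continuous_id
  have hUopen : IsOpen U := isOpen_interior
  have hUsub : U ⊆ FU := interior_subset
  have hUnonempty : U.Nonempty := hUne
  -- Ω is nonempty
  rcases isEmpty_or_nonempty Ω with hΩ | hΩ
  · exfalso
    apply hg1
    have : (⟨g, hgG⟩ : G) = 1 := hfaithful (Subsingleton.elim _ _)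
    exact congrArg Subtype.val this
  obtain ⟨ω⟩ := hΩ
  set g' : G := ⟨g, hgG⟩ with hg'
  by_cases hfix : ρ g' ω = ω
  · refine ⟨ω, fun htf => ?_⟩
    have he := htf g ⟨hgG, hfix⟩ hg1
    rw [hUdef, hFU] at hUnonempty
    rw [he] at hUnonempty
    exact Set.not_nonempty_empty hUnonempty
  · -- second point of the pair
    set ω₂ : Ω := (ρ g')⁻¹ ω with hω₂
    have hne : ω ≠ ω₂ := by
      intro hcontra
      apply hfix
      calc ρ g' ω = ρ g' ((ρ g')⁻¹ ω) := by rw [← hω₂, ← hcontra]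
        _ = ω := Equiv.Perm.apply_inv_self _ _
    -- a boundary point of U
    have hUneuniv : U ≠ Set.univ := by
      intro h
      apply hg1
      have : FU = Set.univ := Set.eq_univ_of_univ_subset (h ▸ hUsub)
      exact Equiv.ext fun x => (Set.eq_univ_iff_forall.mp this x)
    obtain ⟨b, hbcl, hbU⟩ : (closure U \ U).Nonempty := by
      rw [Set.nonempty_iff_ne_empty]
      intro h
      have hclsub : closure U ⊆ U := by
        intro x hx
        by_contra hxU
        exact Set.eq_empty_iff_forall_notMem.mp h x ⟨hx, hxU⟩
      have hclopen : IsClopen U :=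
        ⟨closure_eq_iff_isClosed.mp (subset_antisymm hclsub subset_closure), hUopen⟩
      rcases isClopen_iff.mp hclopen with h0 | h1
      · exact Set.not_nonempty_empty (h0 ▸ hUnonempty)
      · exact hUneuniv h1
    -- use minimality of the pair stabilizer at b
    have hd := hpairmin ω ω₂ hne b
    obtain ⟨y, ⟨h, hhS, hhb⟩, hyU⟩ := hd.exists_mem_open hUopen hUnonempty
    obtain ⟨hhG, hρ1, hρ2⟩ := hhS
    set h' : G := ⟨h, hhG⟩ with hh'
    have hhbU : h b ∈ U := hhb ▸ hyU
    set N : Set S1 := h ⁻¹' U with hN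
    have hNopen : IsOpen N := hUopen.preimage (hHomeo h hhG).1
    have hbN : b ∈ N := hhbU
    -- a non-fixed point in N
    obtain ⟨q, hqN, hgq⟩ : ∃ q ∈ N, g q ≠ q := by
      by_contra hc
      push_neg at hc
      exact hbU (interior_maximal (fun x hx => hc x hx) hNopen hbN)
    -- a point of N ∩ U
    obtain ⟨w, hwN, hwU⟩ : (N ∩ U).Nonempty := mem_closure_iff.mp hbcl N hNopen hbN
    -- the commutator
    set k' : G := g' * h' * g'⁻¹ * h'⁻¹ with hk'
    set k : Equiv.Perm S1 := (k' : Equiv.Perm S1) with hk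
    have hkcoe : k = g * h * g⁻¹ * h⁻¹ := rfl
    -- k stabilizes ω
    have hinvh : (ρ h')⁻¹ ω = ω := by
      nth_rewrite 1 [← hρ1]; exact Equiv.Perm.inv_apply_self _ _
    have hρk : ρ k' ω = ω := by
      rw [hk']
      simp only [map_mul, map_inv, Equiv.Perm.mul_apply]
      rw [hinvh]
      have : (ρ g')⁻¹ ω = ω₂ := rfl
      rw [this, hρ2]
      exact Equiv.Perm.apply_inv_self (ρ g') ω
    -- k ≠ 1
    have hhqU : h q ∈ U := hqN
    have hk1 : k ≠ 1 := by
      intro he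
      have h1 : k (h (g q)) = h (g q) := by rw [he]; rfl
      rw [hkcoe] at h1
      simp only [Equiv.Perm.mul_apply, Equiv.Perm.inv_apply_self] at h1
      rw [hUsub hhqU] at h1
      exact hgq (h.injective h1.symm)
    -- fixed set of k contains U ∩ h '' U
    have hsub : U ∩ h '' U ⊆ {x : S1 | k x = x} := by
      rintro x ⟨hxU, y, hyU, rfl⟩
      show k (h y) = h y
      rw [hkcoe]
      simp only [Equiv.Perm.mul_apply, Equiv.symm_apply_apply, Equiv.Perm.inv_apply_self]
      have hgy : g⁻¹ y = y := by
        have := hUsub hyU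
        nth_rewrite 1 [← this]
        exact Equiv.Perm.inv_apply_self _ _
      rw [hgy]
      exact hUsub hxU
    have hopen : IsOpen (U ∩ h '' U) := by
      have : h '' U = h.symm ⁻¹' U := by
        ext x; simp [Equiv.image_eq_preimage_symm]
      rw [this]
      exact hUopen.inter (hUopen.preimage (hHomeo h hhG).2)
    have hnon : (U ∩ h '' U).Nonempty := ⟨h w, hwN, w, hwU, rfl⟩
    refine ⟨ω, fun htf => ?_⟩
    have := htf k ⟨k'.2, hρk⟩ hk1
    have hni : (interior {x : S1 | k x = x}).Nonempty :=
      hnon.mono (interior_maximal hsub hopen)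
    rw [this] at hni
    exact Set.not_nonempty_empty hni
end
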